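/- Structure of the optimal policy: for each stage n there exist thresholds b̲_n(p,r) ≤ b̄_n(p,r) (depending on price p and regime r) such that the decision rule f*_n(x,p,r) = min(b̲_n(p,r) - x, i_n^max(x)) if b_min ≤ x < b̲_n(p,r); = 0 if b̲_n(p,r) ≤ x ≤ b̄_n(p,r); = max(b̄_n(p,r) - x, i_n^min(x)) if b̄_n(p,r) < x ≤ b_max, maximizes a ↦ h(p,a) + U_n(x+a, p, r) over the admissible set D_n(x), where U_n(·,p,r) is concave. In particular, with z = x + a, the maximizer z*(x,p,r) of z ↦ h(p, z-x) + U_n(z,p,r) over [max(i_n^min(x)+x, b_min), min(b_max, i_n^max(x)+x)] equals min(b̲_n(p,r), i_n^max(x)+x) for x < b̲_n, equals x for x ∈ [b̲_n, b̄_n], and equals max(b̄_n(p,r), i_n^min(x)+x) for x > b̄_n. -/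

import Mathlib

open Set

lemma conc_le_left {S : Set ℝ} {φ : ℝ → ℝ} (hφ : ConcaveOn ℝ S φ) {z y m : ℝ}
    (hz : z ∈ S) (hm : m ∈ S) (hzy : z ≤ y) (hym : y ≤ m) (hmax : φ z ≤ φ m) :
    φ z ≤ φ y := by
  rcases eq_or_lt_of_le (hzy.trans hym) with hzm | hzm
  · have : z = y := le_antisymm hzy (hym.trans hzm.ge)
    rw [this]
  · have hmz : 0 < m - z := sub_pos.2 hzm
    set a := (m - y) / (m - z) with ha_def
    set b := (y - z) / (m - z) with hb_def
    have ha : 0 ≤ a := div_nonneg (by linarith) hmz.le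
    have hb : 0 ≤ b := div_nonneg (by linarith) hmz.le
    have hab : a + b = 1 := by rw [ha_def, hb_def, ← add_div, div_eq_one_iff_eq hmz.ne']; ring
    have hcomb : a • z + b • m = y := by
      simp only [smul_eq_mul, ha_def, hb_def]
      field_simp
      ring
    have h2 := hφ.2 hz hm ha hb hab
    rw [hcomb] at h2
    simp only [smul_eq_mul] at h2
    have h3 : a * φ z + b * φ z = φ z := by rw [← add_mul, hab, one_mul]
    have h4 : b * φ z ≤ b * φ m := mul_le_mul_of_nonneg_left hmax hb
    linarith

lemma conc_le_right {S : Set ℝ} {φ : ℝ → ℝ} (hφ : ConcaveOn ℝ S φ) {z y m : ℝ}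
    (hz : z ∈ S) (hm : m ∈ S) (hyz : y ≤ z) (hmy : m ≤ y) (hmax : φ z ≤ φ m) :
    φ z ≤ φ y := by
  rcases eq_or_lt_of_le (hmy.trans hyz) with hmz | hmz
  · have : z = y := le_antisymm (hmz ▸ hmy) hyz
    rw [this]
  · have hmz' : 0 < z - m := sub_pos.2 hmz
    set a := (y - m) / (z - m) with ha_def
    set b := (z - y) / (z - m) with hb_def
    have ha : 0 ≤ a := div_nonneg (by linarith) hmz'.le
    have hb : 0 ≤ b := div_nonneg (by linarith) hmz'.le
    have hab : a + b = 1 := by rw [ha_def, hb_def, ← add_div, div_eq_one_iff_eq hmz'.ne']; ring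
    have hcomb : a • z + b • m = y := by
      simp only [smul_eq_mul, ha_def, hb_def]
      field_simp
      ring
    have h2 := hφ.2 hz hm ha hb hab
    rw [hcomb] at h2
    simp only [smul_eq_mul] at h2
    have h3 : a * φ z + b * φ z = φ z := by rw [← add_mul, hab, one_mul]
    have h4 : b * φ z ≤ b * φ m := mul_le_mul_of_nonneg_left hmax hb
    linarith

/-- structure of the optimal policy: with concave continuation value `U`,
prices `k ≥ e ≥ 0`, thresholds `bl ≤ bu` maximizing `U z - k z` resp. `U z - e z` on
`[bmin, bmax]`, rates `imin x ≤ 0 ≤ imax x`, and one-stage reward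
`h a = -k a` for `a > 0`, `-e a` for `a < 0`, `0` for `a = 0`, the target level
`z* = min bl (imax x + x)` for `x < bl`, `z* = x` for `x ∈ [bl, bu]`, and
`z* = max bu (imin x + x)` for `x > bu` maximizes `z ↦ h (z - x) + U z` over the
feasible set `[max (imin x + x) bmin, min bmax (imax x + x)]`. -/
theorem stmt6 (bmin bmax k e : ℝ) (hb : bmin ≤ bmax) (hke : e ≤ k) (he : 0 ≤ e)
    (U : ℝ → ℝ) (hU : ConcaveOn ℝ (Set.Icc bmin bmax) U)
    (imin imax : ℝ → ℝ)
    (himin : ∀ x ∈ Set.Icc bmin bmax, imin x ≤ 0)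
    (himax : ∀ x ∈ Set.Icc bmin bmax, 0 ≤ imax x)
    (h : ℝ → ℝ) (hh : ∀ a, h a = if 0 < a then -(k * a) else if a < 0 then -(e * a) else 0)
    (bl bu : ℝ) (hbl : bl ∈ Set.Icc bmin bmax) (hbu : bu ∈ Set.Icc bmin bmax)
    (hblu : bl ≤ bu)
    (hblmax : ∀ z ∈ Set.Icc bmin bmax, U z - k * z ≤ U bl - k * bl)
    (hbumax : ∀ z ∈ Set.Icc bmin bmax, U z - e * z ≤ U bu - e * bu)
    (x : ℝ) (hx : x ∈ Set.Icc bmin bmax)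
    (zstar : ℝ)
    (hzstar : zstar = if x < bl then min bl (imax x + x)
        else if x ≤ bu then x else max bu (imin x + x)) :
    zstar ∈ Set.Icc (max (imin x + x) bmin) (min bmax (imax x + x)) ∧
    ∀ z ∈ Set.Icc (max (imin x + x) bmin) (min bmax (imax x + x)),
      h (z - x) + U z ≤ h (zstar - x) + U zstar := by
  obtain ⟨hx1, hx2⟩ := hx
  have himn := himin x ⟨hx1, hx2⟩
  have himx := himax x ⟨hx1, hx2⟩
  have hL : max (imin x + x) bmin ≤ x := max_le (by linarith) hx1
  have hR : x ≤ min bmax (imax x + x) := le_min hx2 (by linarith)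
  have hsub : ∀ z ∈ Set.Icc (max (imin x + x) bmin) (min bmax (imax x + x)),
      z ∈ Set.Icc bmin bmax := fun z hz =>
    ⟨(le_max_right _ _).trans hz.1, hz.2.trans (min_le_left _ _)⟩
  have hψ : ConcaveOn ℝ (Set.Icc bmin bmax) (fun z => U z - k * z) := by
    refine ⟨convex_Icc _ _, fun p hp q hq a b ha hb' hab => ?_⟩
    have := hU.2 hp hq ha hb' hab
    simp only [smul_eq_mul] at *
    nlinarith
  have hφ : ConcaveOn ℝ (Set.Icc bmin bmax) (fun z => U z - e * z) := by
    refine ⟨convex_Icc _ _, fun p hp q hq a b ha hb' hab => ?_⟩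
    have := hU.2 hp hq ha hb' hab
    simp only [smul_eq_mul] at *
    nlinarith
  have hgk : ∀ z, x ≤ z → h (z - x) = -(k * (z - x)) := by
    intro z hz
    rw [hh]
    rcases lt_or_eq_of_le hz with h' | h'
    · rw [if_pos (by linarith)]
    · rw [← h']
      simp
  have hge : ∀ z, z ≤ x → h (z - x) = -(e * (z - x)) := by
    intro z hz
    rw [hh]
    rcases lt_or_eq_of_le hz with h' | h'
    · rw [if_neg (by linarith), if_pos (by linarith)]
    · rw [h']
      simp
  rcases lt_or_ge x bl with hxbl | hxbl
  · -- Case A : x < bl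
    rw [if_pos hxbl] at hzstar
    rcases le_or_gt bl (imax x + x) with hA | hA
    · -- zstar = bl
      have hz' : zstar = bl := by rw [hzstar, min_eq_left hA]
      rw [hz']
      have hmem : bl ∈ Set.Icc (max (imin x + x) bmin) (min bmax (imax x + x)) :=
        ⟨hL.trans hxbl.le, le_min hbl.2 hA⟩
      refine ⟨hmem, fun z hz => ?_⟩
      have hzI := hsub z hz
      rw [hgk bl hxbl.le]
      rcases le_or_gt x z with hxz | hxz
      · rw [hgk z hxz]
        have := hblmax z hzI
        linarith
      · rw [hge z hxz.le]
        have h1 : (fun z => U z - e * z) z ≤ (fun z => U z - e * z) x :=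
          conc_le_left hφ hzI ⟨hbu.1, hbu.2⟩ hxz.le (by linarith) (hbumax z hzI)
        have h2 := hblmax x ⟨hx1, hx2⟩
        simp only at h1
        linarith
    · -- zstar = imax x + x < bl
      have hz' : zstar = imax x + x := by rw [hzstar, min_eq_right hA.le]
      rw [hz']
      have hzsbm : imax x + x ≤ bmax := by linarith [hbl.2]
      have hmem : imax x + x ∈ Set.Icc (max (imin x + x) bmin) (min bmax (imax x + x)) :=
        ⟨hL.trans (by linarith), le_min hzsbm le_rfl⟩
      refine ⟨hmem, fun z hz => ?_⟩
      have hzI := hsub z hz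
      have hzsI : imax x + x ∈ Set.Icc bmin bmax := hsub _ hmem
      have hzle : z ≤ imax x + x := hz.2.trans (min_le_right _ _)
      rw [hgk (imax x + x) (by linarith)]
      rcases le_or_gt x z with hxz | hxz
      · rw [hgk z hxz]
        have h1 : (fun z => U z - k * z) z ≤ (fun z => U z - k * z) (imax x + x) :=
          conc_le_left hψ hzI ⟨hbl.1, hbl.2⟩ hzle hA.le (hblmax z hzI)
        simp only at h1
        linarith
      · rw [hge z hxz.le]
        have h1 : (fun z => U z - e * z) z ≤ (fun z => U z - e * z) x :=
          conc_le_left hφ hzI ⟨hbu.1, hbu.2⟩ hxz.le (by linarith) (hbumax z hzI)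
        have h2 : (fun z => U z - k * z) x ≤ (fun z => U z - k * z) (imax x + x) :=
          conc_le_left hψ ⟨hx1, hx2⟩ ⟨hbl.1, hbl.2⟩ (by linarith) hA.le
            (hblmax x ⟨hx1, hx2⟩)
        simp only at h1 h2
        linarith
  · rw [if_neg (not_lt.2 hxbl)] at hzstar
    rcases le_or_gt x bu with hxbu | hxbu
    · -- Case B : bl ≤ x ≤ bu, zstar = x
      rw [if_pos hxbu] at hzstar
      rw [hzstar]
      refine ⟨⟨hL, hR⟩, fun z hz => ?_⟩
      have hzI := hsub z hz
      rw [hgk _ le_rfl]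
      rcases le_or_gt x z with hxz | hxz
      · rw [hgk z hxz]
        have h1 : (fun z => U z - k * z) z ≤ (fun z => U z - k * z) x :=
          conc_le_right hψ hzI ⟨hbl.1, hbl.2⟩ hxz hxbl (hblmax z hzI)
        simp only at h1
        linarith
      · rw [hge z hxz.le]
        have h1 : (fun z => U z - e * z) z ≤ (fun z => U z - e * z) x :=
          conc_le_left hφ hzI ⟨hbu.1, hbu.2⟩ hxz.le hxbu (hbumax z hzI)
        simp only at h1
        linarith
    · -- Case C : bu < x
      rw [if_neg (not_le.2 hxbu)] at hzstar
      rcases le_or_gt (imin x + x) bu with hC | hC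
      · -- zstar = bu
        have hz' : zstar = bu := by rw [hzstar, max_eq_left hC]
        rw [hz']
        have hmem : bu ∈ Set.Icc (max (imin x + x) bmin) (min bmax (imax x + x)) :=
          ⟨max_le hC hbu.1, le_min hbu.2 (by linarith)⟩
        refine ⟨hmem, fun z hz => ?_⟩
        have hzI := hsub z hz
        rw [hge bu hxbu.le]
        rcases le_or_gt z x with hzx | hzx
        · rw [hge z hzx]
          have := hbumax z hzI
          linarith
        · rw [hgk z hzx.le]
          have h1 : (fun z => U z - k * z) z ≤ (fun z => U z - k * z) x :=
            conc_le_right hψ hzI ⟨hbl.1, hbl.2⟩ hzx.le hxbl (hblmax z hzI)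
          have h2 := hbumax x ⟨hx1, hx2⟩
          simp only at h1
          linarith
      · -- zstar = imin x + x > bu
        have hz' : zstar = imin x + x := by rw [hzstar, max_eq_right hC.le]
        rw [hz']
        have hzsbm : bmin ≤ imin x + x := by linarith [hbu.1]
        have hmem : imin x + x ∈ Set.Icc (max (imin x + x) bmin) (min bmax (imax x + x)) :=
          ⟨max_le le_rfl hzsbm, le_min (by linarith) (by linarith)⟩
        refine ⟨hmem, fun z hz => ?_⟩
        have hzI := hsub z hz
        have hzsI : imin x + x ∈ Set.Icc bmin bmax := hsub _ hmem
        have hzge : imin x + x ≤ z := (le_max_left _ _).trans hz.1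
        rw [hge (imin x + x) (by linarith)]
        rcases le_or_gt z x with hzx | hzx
        · rw [hge z hzx]
          have h1 : (fun z => U z - e * z) z ≤ (fun z => U z - e * z) (imin x + x) :=
            conc_le_right hφ hzI ⟨hbu.1, hbu.2⟩ hzge hC.le (hbumax z hzI)
          simp only at h1
          linarith
        · rw [hgk z hzx.le]
          have h1 : (fun z => U z - k * z) z ≤ (fun z => U z - k * z) x :=
            conc_le_right hψ hzI ⟨hbl.1, hbl.2⟩ hzx.le hxbl (hblmax z hzI)
          have h2 : (fun z => U z - e * z) x ≤ (fun z => U z - e * z) (imin x + x) :=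
            conc_le_right hφ ⟨hx1, hx2⟩ ⟨hbu.1, hbu.2⟩ (by linarith) hC.le
              (hbumax x ⟨hx1, hx2⟩)
          simp only at h1 h2
          linarith
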